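/- Let H be a subhypergraph of K^{(s)}(V_1,...,V_r) (parts of sizes n_1 ≤ ... ≤ n_r) with no k vertex-disjoint copies of K^{(s)}_r. Choose (x_1,...,x_r) uniformly at random from V_1 × ⋯ × V_r and set T = {x_1,...,x_r}. Then the expected number of edges of H inside T equals ∑_{A ⊆ [r], |A|=s} e(V_A)/∏_{i∈A} n_i, and this expectation is at most C(r,s) − 1 + (k−1)/n_1. -/

import Mathlib

/-- `H` (a family of finite edge sets) contains a matching of size `k`:
`k` pairwise disjoint edges. -/
def hasMatching {α : Type*} [DecidableEq α] (H : Finset (Finset α)) (k : ℕ) : Prop :=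
  ∃ M ⊆ H, M.card = k ∧ (M : Set (Finset α)).Pairwise Disjoint

/-- The edge set of the complete `r`-partite `s`-uniform hypergraph with parts
`V i = Fin (n i)`: all `s`-sets meeting each part in at most one vertex. -/
def crossEdges (r s : ℕ) (n : Fin r → ℕ) : Finset (Finset ((i : Fin r) × Fin (n i))) :=
  Finset.univ.filter fun S =>
    S.card = s ∧ ∀ i : Fin r, (S.filter fun v => v.1 = i).card ≤ 1

/-- `T` is a copy of `K_r^{(s)}` in the `s`-graph `H`: it is a transversal
(one vertex in each part) all of whose `s`-subsets are edges of `H`. -/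
def isKrCopy (r s : ℕ) (n : Fin r → ℕ) (H : Finset (Finset ((i : Fin r) × Fin (n i))))
    (T : Finset ((i : Fin r) × Fin (n i))) : Prop :=
  (∀ i : Fin r, (T.filter fun v => v.1 = i).card = 1) ∧ ∀ S ∈ T.powersetCard s, S ∈ H

/-- `H` contains `k` pairwise vertex-disjoint copies of `K_r^{(s)}`. -/
def hasKDisjointKr (r s k : ℕ) (n : Fin r → ℕ)
    (H : Finset (Finset ((i : Fin r) × Fin (n i)))) : Prop :=
  ∃ C : Finset (Finset ((i : Fin r) × Fin (n i))), C.card = k ∧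
    (∀ T ∈ C, isKrCopy r s n H T) ∧
    (C : Set (Finset ((i : Fin r) × Fin (n i)))).Pairwise Disjoint

/-- The number of `s`-cliques of the graph with edge set `H`
(an `s`-clique is an `s`-set all of whose `2`-subsets are edges). -/
def cliqueCount (r s : ℕ) (n : Fin r → ℕ)
    (H : Finset (Finset ((i : Fin r) × Fin (n i)))) : ℕ :=
  (Finset.univ.filter fun S : Finset ((i : Fin r) × Fin (n i)) =>
    S.card = s ∧ ∀ e ∈ S.powersetCard 2, e ∈ H).card

/-! ### Auxiliary material -/

section Aux

variable {r s : ℕ} {n : Fin r → ℕ}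

abbrev Trv (n : Fin r → ℕ) := (i : Fin r) → Fin (n i)

def TT (x : Trv n) : Finset ((i : Fin r) × Fin (n i)) :=
  Finset.univ.image fun i => (⟨i, x i⟩ : (i : Fin r) × Fin (n i))
lemma mem_TT {x : Trv n} {v : (i : Fin r) × Fin (n i)} :
    v ∈ TT x ↔ x v.1 = v.2 := by
  constructor
  · intro h
    rcases Finset.mem_image.1 h with ⟨i, -, hi⟩
    cases hi; rfl
  · intro h
    obtain ⟨i, a⟩ := v
    have h' : x i = a := h
    subst h'
    exact Finset.mem_image.2 ⟨i, Finset.mem_univ _, rfl⟩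

lemma card_TT (x : Trv n) : (TT x).card = r := by
  rw [TT, Finset.card_image_of_injective _ (fun i j h => by cases h; rfl),
    Finset.card_univ, Fintype.card_fin]

lemma mem_crossEdges {e : Finset ((i : Fin r) × Fin (n i))} :
    e ∈ crossEdges r s n ↔ e.card = s ∧ ∀ i : Fin r, (e.filter fun v => v.1 = i).card ≤ 1 := by
  simp [crossEdges]

lemma crossEdges_eq_of_fst {e : Finset ((i : Fin r) × Fin (n i))}
    (he : e ∈ crossEdges r s n) {v w : (i : Fin r) × Fin (n i)}
    (hv : v ∈ e) (hw : w ∈ e) (h : v.1 = w.1) : v = w := by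
  have h1 := (mem_crossEdges.1 he).2 v.1
  have : v ∈ e.filter fun u => u.1 = v.1 := Finset.mem_filter.2 ⟨hv, rfl⟩
  have hw' : w ∈ e.filter fun u => u.1 = v.1 := Finset.mem_filter.2 ⟨hw, h.symm⟩
  exact Finset.card_le_one.1 h1 _ this _ hw' |>.symm ▸ rfl

lemma card_supp {e : Finset ((i : Fin r) × Fin (n i))} (he : e ∈ crossEdges r s n) :
    (e.image Sigma.fst).card = s := by
  rw [Finset.card_image_of_injOn (fun v hv w hw h => crossEdges_eq_of_fst he hv hw h)]
  exact (mem_crossEdges.1 he).1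

lemma subset_TT_iff {e : Finset ((i : Fin r) × Fin (n i))} (he : e ∈ crossEdges r s n)
    (x : Trv n) : e ⊆ TT x ↔ ∀ i ∈ e.image Sigma.fst, (⟨i, x i⟩ : (i : Fin r) × Fin (n i)) ∈ e := by
  constructor
  · intro h i hi
    rcases Finset.mem_image.1 hi with ⟨v, hv, rfl⟩
    have := mem_TT.1 (h hv)
    obtain ⟨j, a⟩ := v
    have h' : x j = a := this
    subst h'
    exact hv
  · intro h v hv
    have h2 : (⟨v.1, x v.1⟩ : (i : Fin r) × Fin (n i)) ∈ e :=
      h v.1 (Finset.mem_image.2 ⟨v, hv, rfl⟩)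
    have := crossEdges_eq_of_fst he hv h2 rfl
    rw [this]
    exact mem_TT.2 rfl

lemma count_ext {e : Finset ((i : Fin r) × Fin (n i))} (he : e ∈ crossEdges r s n) :
    (Finset.univ.filter fun x : Trv n => e ⊆ TT x).card
      = ∏ i : Fin r, if i ∈ e.image Sigma.fst then 1 else n i := by
  classical
  have hset : (Finset.univ.filter fun x : Trv n => e ⊆ TT x)
      = Fintype.piFinset (fun i => Finset.univ.filter
          (fun a : Fin (n i) => (⟨i, a⟩ : (j : Fin r) × Fin (n j)) ∈ e ∨ i ∉ e.image Sigma.fst)) := by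
    ext x
    simp only [Finset.mem_filter, Finset.mem_univ, true_and, Fintype.mem_piFinset]
    rw [subset_TT_iff he]
    constructor
    · intro h i
      by_cases hi : i ∈ e.image Sigma.fst
      · exact Or.inl (h i hi)
      · exact Or.inr hi
    · intro h i hi
      rcases h i with h' | h'
      · exact h'
      · exact absurd hi h'
  rw [hset, Fintype.card_piFinset]
  refine Finset.prod_congr rfl fun i _ => ?_
  by_cases hi : i ∈ e.image Sigma.fst
  · rw [if_pos hi]
    have hcard : (e.filter fun v => v.1 = i).card = 1 := by
      refine le_antisymm ((mem_crossEdges.1 he).2 i) ?_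
      rcases Finset.mem_image.1 hi with ⟨v, hv, rfl⟩
      exact Finset.card_pos.2 ⟨v, Finset.mem_filter.2 ⟨hv, rfl⟩⟩
    rw [← hcard]
    refine Finset.card_bij (fun a _ => ⟨i, a⟩) ?_ ?_ ?_
    · intro a ha
      rcases (Finset.mem_filter.1 ha).2 with h' | h'
      · exact Finset.mem_filter.2 ⟨h', rfl⟩
      · exact absurd hi h'
    · intro a _ b _ hab
      have := (Sigma.mk.inj_iff.1 hab).2
      exact eq_of_heq this
    · intro v hv
      rcases Finset.mem_filter.1 hv with ⟨hv1, hv2⟩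
      obtain ⟨j, b⟩ := v
      have : j = i := hv2
      subst this
      exact ⟨b, Finset.mem_filter.2 ⟨Finset.mem_univ _, Or.inl hv1⟩, rfl⟩
  · rw [if_neg hi, Finset.filter_true_of_mem (fun a _ => Or.inr hi), Finset.card_univ,
      Fintype.card_fin]

lemma sum_counts {H : Finset (Finset ((i : Fin r) × Fin (n i)))} (hH : H ⊆ crossEdges r s n) :
    ∑ x : Trv n, (H.filter fun e => e ⊆ TT x).card
      = ∑ A ∈ (Finset.univ : Finset (Fin r)).powersetCard s,
          (H.filter fun e => ∀ v ∈ e, v.1 ∈ A).card * ∏ i ∈ Aᶜ, n i := by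
  classical
  have h1 : ∑ x : Trv n, (H.filter fun e => e ⊆ TT x).card
      = ∑ e ∈ H, (Finset.univ.filter fun x : Trv n => e ⊆ TT x).card := by
    simp only [Finset.card_filter]
    rw [Finset.sum_comm]
  rw [h1]
  have h2 : ∀ e ∈ H, (Finset.univ.filter fun x : Trv n => e ⊆ TT x).card
      = ∏ i ∈ (e.image Sigma.fst)ᶜ, n i := by
    intro e he
    rw [count_ext (hH he)]
    rw [← Finset.prod_mul_prod_compl (e.image Sigma.fst)
      (fun i => if i ∈ e.image Sigma.fst then 1 else n i)]
    rw [Finset.prod_eq_one (fun i (hi : i ∈ e.image Sigma.fst) => if_pos hi), one_mul]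
    exact Finset.prod_congr rfl fun i hi => if_neg (Finset.mem_compl.1 hi)
  rw [Finset.sum_congr rfl h2]
  have hmaps : ∀ e ∈ H, e.image Sigma.fst ∈ (Finset.univ : Finset (Fin r)).powersetCard s :=
    fun e he => Finset.mem_powersetCard.2 ⟨Finset.subset_univ _, card_supp (hH he)⟩
  rw [← Finset.sum_fiberwise_of_maps_to hmaps (fun e => ∏ i ∈ (e.image Sigma.fst)ᶜ, n i)]
  refine Finset.sum_congr rfl fun A hA => ?_
  have hAcard : A.card = s := (Finset.mem_powersetCard.1 hA).2
  have hfeq : H.filter (fun e => e.image Sigma.fst = A)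
      = H.filter fun e => ∀ v ∈ e, v.1 ∈ A := by
    refine Finset.filter_congr fun e he => ?_
    constructor
    · intro h v hv
      rw [← h]
      exact Finset.mem_image.2 ⟨v, hv, rfl⟩
    · intro h
      refine Finset.eq_of_subset_of_card_le (Finset.image_subset_iff.2 h) ?_
      rw [hAcard, card_supp (hH he)]
  calc ∑ e ∈ H.filter (fun e => e.image Sigma.fst = A), ∏ i ∈ (e.image Sigma.fst)ᶜ, n i
      = ∑ _e ∈ H.filter (fun e => e.image Sigma.fst = A), ∏ i ∈ Aᶜ, n i := by
        refine Finset.sum_congr rfl fun e he => ?_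
        rw [(Finset.mem_filter.1 he).2]
    _ = (H.filter fun e => ∀ v ∈ e, v.1 ∈ A).card * ∏ i ∈ Aᶜ, n i := by
        rw [Finset.sum_const, smul_eq_mul, hfeq]


lemma TT_transversal (x : Trv n) (i : Fin r) :
    ((TT x).filter fun v => v.1 = i).card = 1 := by
  rw [Finset.card_eq_one]
  refine ⟨⟨i, x i⟩, ?_⟩
  ext v
  simp only [Finset.mem_filter, Finset.mem_singleton]
  constructor
  · rintro ⟨hv, rfl⟩
    have := mem_TT.1 hv
    obtain ⟨j, a⟩ := v
    have h' : x j = a := this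
    subst h'
    rfl
  · rintro rfl
    exact ⟨mem_TT.2 rfl, rfl⟩

lemma TT_inj : Function.Injective (TT (n := n)) := by
  intro x y h
  funext i
  have : (⟨i, x i⟩ : (j : Fin r) × Fin (n j)) ∈ TT y := h ▸ mem_TT.2 rfl
  exact (mem_TT.1 this).symm

lemma TT_disjoint {x y : Trv n} (h : ∀ i, x i ≠ y i) : Disjoint (TT x) (TT y) := by
  rw [Finset.disjoint_left]
  intro v hvx hvy
  exact h v.1 ((mem_TT.1 hvx).trans (mem_TT.1 hvy).symm)

section Part2
open Fin.NatCast
variable {k : ℕ} (hr : 0 < r)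

/-- the canonical representative of the "line" through `x` -/
noncomputable def rep [∀ i, NeZero (n i)] (hr : 0 < r) (x : Trv n) : Trv n :=
  fun i => x i - (((x ⟨0, hr⟩ : ℕ) : Fin (n i)))

lemma rep_zero [∀ i, NeZero (n i)] (x : Trv n) : rep hr x ⟨0, hr⟩ = 0 := by
  rw [rep, Fin.cast_val_eq_self, sub_self]

lemma rep_eq_cases [∀ i, NeZero (n i)] (hmono : Monotone n) {x y : Trv n}
    (h : rep hr x = rep hr y) : x = y ∨ ∀ i, x i ≠ y i := by
  by_cases h0 : x ⟨0, hr⟩ = y ⟨0, hr⟩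
  · left
    funext i
    have hi := congrFun h i
    rw [rep, rep, h0, sub_left_inj] at hi
    exact hi
  · right
    intro i hxy
    have hi := congrFun h i
    rw [rep, rep, hxy, sub_right_inj] at hi
    have hle : n ⟨0, hr⟩ ≤ n i := hmono (by rw [Fin.le_def]; exact Nat.zero_le _)
    have hx : (((x ⟨0, hr⟩ : ℕ) : Fin (n i)) : ℕ) = (x ⟨0, hr⟩ : ℕ) :=
      Fin.val_cast_of_lt (lt_of_lt_of_le (x ⟨0, hr⟩).2 hle)
    have hy : (((y ⟨0, hr⟩ : ℕ) : Fin (n i)) : ℕ) = (y ⟨0, hr⟩ : ℕ) :=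
      Fin.val_cast_of_lt (lt_of_lt_of_le (y ⟨0, hr⟩).2 hle)
    exact h0 (Fin.val_injective (by rw [← hx, ← hy, hi]))

lemma F_card_le {H : Finset (Finset ((i : Fin r) × Fin (n i)))}
    (hmono : Monotone n) (hk : 1 ≤ k) (hkn : k ≤ n ⟨0, hr⟩)
    (hfree : ¬ hasKDisjointKr r s k n H) :
    (Finset.univ.filter fun x : Trv n => ∀ S ∈ (TT x).powersetCard s, S ∈ H).card
      ≤ (k - 1) * ∏ i ∈ Finset.univ.erase ⟨0, hr⟩, n i := by
  classical
  haveI : ∀ i, NeZero (n i) := fun i => ⟨by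
    have : (1 : ℕ) ≤ n i := le_trans (le_trans hk hkn)
      (hmono (by rw [Fin.le_def]; exact Nat.zero_le _))
    omega⟩
  set F := Finset.univ.filter fun x : Trv n => ∀ S ∈ (TT x).powersetCard s, S ∈ H with hF
  -- each fiber of `rep` inside `F` has at most `k-1` elements
  have hfiber : ∀ ρ ∈ F.image (rep hr), (F.filter fun x => rep hr x = ρ).card ≤ k - 1 := by
    intro ρ _
    by_contra hlt
    push_neg at hlt
    have hk' : k ≤ (F.filter fun x => rep hr x = ρ).card := by omega
    obtain ⟨S, hS, hScard⟩ := Finset.exists_subset_card_eq hk'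
    refine hfree ⟨S.image TT, ?_, ?_, ?_⟩
    · rw [Finset.card_image_of_injective _ TT_inj, hScard]
    · intro T hT
      rcases Finset.mem_image.1 hT with ⟨x, hx, rfl⟩
      have hx' := Finset.mem_filter.1 (hS hx)
      have hxF := (Finset.mem_filter.1 hx'.1).2
      exact ⟨TT_transversal x, hxF⟩
    · intro T hT T' hT' hne
      rcases Finset.mem_image.1 hT with ⟨x, hx, rfl⟩
      rcases Finset.mem_image.1 hT' with ⟨y, hy, rfl⟩
      have hxy : x ≠ y := fun h => hne (by rw [h])
      have hrx := (Finset.mem_filter.1 (hS hx)).2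
      have hry := (Finset.mem_filter.1 (hS hy)).2
      rcases rep_eq_cases hr hmono (hrx.trans hry.symm) with h | h
      · exact absurd h hxy
      · exact TT_disjoint h
  have h1 : F.card ≤ (k - 1) * (F.image (rep hr)).card :=
    Finset.card_le_mul_card_image _ _ hfiber
  -- the image lies in a set of size `∏_{i ≠ 0} n i`
  have h2 : (F.image (rep hr)).card ≤ ∏ i ∈ Finset.univ.erase ⟨0, hr⟩, n i := by
    have hsub : F.image (rep hr) ⊆ Fintype.piFinset
        (fun i => if i = ⟨0, hr⟩ then ({0} : Finset (Fin (n i))) else Finset.univ) := by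
      intro ρ hρ
      rcases Finset.mem_image.1 hρ with ⟨x, _, rfl⟩
      rw [Fintype.mem_piFinset]
      intro i
      by_cases hi : i = ⟨0, hr⟩
      · subst hi
        rw [if_pos rfl, Finset.mem_singleton]
        exact rep_zero hr x
      · rw [if_neg hi]
        exact Finset.mem_univ _
    refine le_trans (Finset.card_le_card hsub) ?_
    rw [Fintype.card_piFinset]
    rw [← Finset.mul_prod_erase Finset.univ _ (Finset.mem_univ ⟨0, hr⟩)]
    rw [if_pos rfl, Finset.card_singleton, one_mul]
    exact le_of_eq (Finset.prod_congr rfl fun i hi => by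
      rw [if_neg (Finset.mem_erase.1 hi).1, Finset.card_univ, Fintype.card_fin])
  calc F.card ≤ (k - 1) * (F.image (rep hr)).card := h1
    _ ≤ (k - 1) * ∏ i ∈ Finset.univ.erase ⟨0, hr⟩, n i := Nat.mul_le_mul_left _ h2

end Part2

lemma part1_eq {H : Finset (Finset ((i : Fin r) × Fin (n i)))}
    (hpos : ∀ i, 0 < n i) (hH : H ⊆ crossEdges r s n) :
    (∑ x : Trv n, ((H.filter fun e => e ⊆ TT x).card : ℝ)) / ∏ i : Fin r, (n i : ℝ)
      = ∑ A ∈ (Finset.univ : Finset (Fin r)).powersetCard s,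
          ((H.filter fun e => ∀ v ∈ e, v.1 ∈ A).card : ℝ) / ∏ i ∈ A, (n i : ℝ) := by
  classical
  have hnum : (∑ x : Trv n, ((H.filter fun e => e ⊆ TT x).card : ℝ))
      = ∑ A ∈ (Finset.univ : Finset (Fin r)).powersetCard s,
          ((H.filter fun e => ∀ v ∈ e, v.1 ∈ A).card : ℝ) * ∏ i ∈ Aᶜ, (n i : ℝ) := by
    have := sum_counts hH
    have := congrArg (Nat.cast : ℕ → ℝ) this
    push_cast at this
    exact this
  rw [hnum, Finset.sum_div]
  refine Finset.sum_congr rfl fun A _ => ?_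
  have hsplit : (∏ i : Fin r, (n i : ℝ)) = (∏ i ∈ A, (n i : ℝ)) * ∏ i ∈ Aᶜ, (n i : ℝ) :=
    (Finset.prod_mul_prod_compl A _).symm
  rw [hsplit, mul_div_mul_comm, div_self (ne_of_gt (Finset.prod_pos fun i _ => by
    exact_mod_cast hpos i)), mul_one]

lemma pointwise_bound {H : Finset (Finset ((i : Fin r) × Fin (n i)))}
    (hH : H ⊆ crossEdges r s n) (x : Trv n) :
    ((H.filter fun e => e ⊆ TT x).card : ℝ) ≤ (r.choose s : ℝ) - 1 +
      (if (∀ S ∈ (TT x).powersetCard s, S ∈ H) then (1 : ℝ) else 0) := by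
  classical
  have hsub : H.filter (fun e => e ⊆ TT x) ⊆ (TT x).powersetCard s := by
    intro e he'
    rcases Finset.mem_filter.1 he' with ⟨heH, hs⟩
    exact Finset.mem_powersetCard.2 ⟨hs, (mem_crossEdges.1 (hH heH)).1⟩
  have hcard : ((TT x).powersetCard s).card = r.choose s := by
    rw [Finset.card_powersetCard, card_TT]
  by_cases hx : ∀ S ∈ (TT x).powersetCard s, S ∈ H
  · rw [if_pos hx]
    have h1 : (H.filter fun e => e ⊆ TT x).card ≤ r.choose s :=
      hcard ▸ Finset.card_le_card hsub
    have := (Nat.cast_le (α := ℝ)).2 h1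
    linarith
  · rw [if_neg hx]
    push_neg at hx
    obtain ⟨S, hS, hSH⟩ := hx
    have hss : H.filter (fun e => e ⊆ TT x) ⊂ (TT x).powersetCard s :=
      ⟨hsub, fun h => hSH (Finset.mem_filter.1 (h hS)).1⟩
    have h1 : (H.filter fun e => e ⊆ TT x).card + 1 ≤ r.choose s :=
      hcard ▸ Finset.card_lt_card hss
    have := (Nat.cast_le (α := ℝ)).2 h1
    push_cast at this
    linarith

end Aux

theorem stmt18 (r s k : ℕ) (hr : 0 < r) (n : Fin r → ℕ) (hmono : Monotone n)
    (hk : 1 ≤ k) (hkn : k ≤ n ⟨0, hr⟩)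
    (H : Finset (Finset ((i : Fin r) × Fin (n i)))) (hH : H ⊆ crossEdges r s n)
    (hfree : ¬ hasKDisjointKr r s k n H) :
    -- the expected number of edges of `H` inside a uniformly random transversal `T`
    let expe : ℝ :=
      (∑ x : (i : Fin r) → Fin (n i),
        ((H.filter fun e =>
          e ⊆ Finset.univ.image fun i => (⟨i, x i⟩ : (i : Fin r) × Fin (n i))).card : ℝ))
      / ∏ i : Fin r, (n i : ℝ)
    expe = (∑ A ∈ (Finset.univ : Finset (Fin r)).powersetCard s,
        ((H.filter fun e => ∀ v ∈ e, v.1 ∈ A).card : ℝ) / ∏ i ∈ A, (n i : ℝ)) ∧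
    expe ≤ (Nat.choose r s : ℝ) - 1 + ((k : ℝ) - 1) / (n ⟨0, hr⟩ : ℝ) := by
  classical
  intro expe
  have hpos : ∀ i, 0 < n i := fun i =>
    lt_of_lt_of_le (lt_of_lt_of_le hk hkn) (hmono (by rw [Fin.le_def]; exact Nat.zero_le _))
  have hexpe : expe = (∑ x : Trv n, ((H.filter fun e => e ⊆ TT x).card : ℝ))
      / ∏ i : Fin r, (n i : ℝ) := rfl
  constructor
  · rw [hexpe, part1_eq hpos hH]
  · rw [hexpe]
    set N : ℝ := ∏ i : Fin r, (n i : ℝ) with hNdef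
    have hN : 0 < N := Finset.prod_pos fun i _ => by exact_mod_cast hpos i
    set F := Finset.univ.filter fun x : Trv n => ∀ S ∈ (TT x).powersetCard s, S ∈ H with hFdef
    have hsum : (∑ x : Trv n, ((H.filter fun e => e ⊆ TT x).card : ℝ))
        ≤ N * ((r.choose s : ℝ) - 1) + F.card := by
      calc (∑ x : Trv n, ((H.filter fun e => e ⊆ TT x).card : ℝ))
          ≤ ∑ x : Trv n, (((r.choose s : ℝ) - 1) +
              (if (∀ S ∈ (TT x).powersetCard s, S ∈ H) then (1 : ℝ) else 0)) :=
            Finset.sum_le_sum fun x _ => pointwise_bound hH x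
        _ = N * ((r.choose s : ℝ) - 1) + F.card := by
            rw [Finset.sum_add_distrib, Finset.sum_const, Finset.sum_boole, Finset.card_univ,
              nsmul_eq_mul]
            have hcard : (Fintype.card (Trv n) : ℝ) = N := by
              rw [hNdef, Fintype.card_pi]
              push_cast
              exact Finset.prod_congr rfl fun i _ => by rw [Fintype.card_fin]
            rw [hcard]
    set P1 : ℝ := ∏ i ∈ Finset.univ.erase ⟨0, hr⟩, (n i : ℝ) with hP1def
    have hP1 : 0 < P1 := Finset.prod_pos fun i _ => by exact_mod_cast hpos i
    have hNP : N = (n ⟨0, hr⟩ : ℝ) * P1 := by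
      rw [hNdef, hP1def, ← Finset.mul_prod_erase Finset.univ _ (Finset.mem_univ ⟨0, hr⟩)]
    have hFc : (F.card : ℝ) ≤ ((k : ℝ) - 1) * P1 := by
      have h := F_card_le (s := s) hr hmono hk hkn hfree (H := H)
      rw [← hFdef] at h
      calc (F.card : ℝ)
          ≤ (((k - 1) * ∏ i ∈ Finset.univ.erase ⟨0, hr⟩, n i : ℕ) : ℝ) := Nat.cast_le.2 h
        _ = ((k : ℝ) - 1) * P1 := by
            rw [hP1def]
            push_cast [Nat.cast_sub hk]
            ring
    calc (∑ x : Trv n, ((H.filter fun e => e ⊆ TT x).card : ℝ)) / N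
        ≤ (N * ((r.choose s : ℝ) - 1) + ((k : ℝ) - 1) * P1) / N := by
          gcongr
          exact hsum.trans (by linarith)
      _ = (r.choose s : ℝ) - 1 + ((k : ℝ) - 1) / (n ⟨0, hr⟩ : ℝ) := by
          rw [add_div, mul_comm N _, mul_div_assoc, div_self (ne_of_gt hN), mul_one, hNP,
            mul_div_mul_right _ _ (ne_of_gt hP1)]
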